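/- Every chordal graph is either a complete graph or has a clique cutset. -/

import Mathlib

open SimpleGraph

namespace CliqueCutAux

variable {V : Type*}

/-- Restriction of a graph to a vertex set, keeping the same vertex type. -/
def restr (G : SimpleGraph V) (T : Set V) : SimpleGraph V where
  Adj u v := G.Adj u v ∧ u ∈ T ∧ v ∈ T
  symm := ⟨fun _ _ ⟨h, hu, hv⟩ => ⟨h.symm, hv, hu⟩⟩
  loopless := ⟨fun _ ⟨h, _, _⟩ => G.irrefl h⟩

lemma restr_support {G : SimpleGraph V} {T : Set V} {u v : V}
    (w : (restr G T).Walk u v) (hu : u ∈ T) : ∀ z ∈ w.support, z ∈ T := by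
  induction w with
  | nil => intro z hz; simp only [Walk.support_nil, List.mem_singleton] at hz; subst hz; exact hu
  | cons h p ih =>
    intro z hz
    rw [Walk.support_cons, List.mem_cons] at hz
    rcases hz with rfl | hz
    · exact h.2.1
    · exact ih h.2.2 z hz

lemma restr_transfer {G : SimpleGraph V} {T T' : Set V} {u v : V}
    (w : (restr G T).Walk u v) (h : ∀ z ∈ w.support, z ∈ T') :
    (restr G T').Reachable u v := by
  induction w with
  | nil => exact Reachable.refl _
  | cons hadj p ih =>
    refine (Adj.reachable ?_).trans (ih ?_)
    · exact ⟨hadj.1, h _ (Walk.start_mem_support _), h _ (by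
        rw [Walk.support_cons]; exact List.mem_cons_of_mem _ (Walk.start_mem_support _))⟩
    · intro z hz; exact h z (by rw [Walk.support_cons]; exact List.mem_cons_of_mem _ hz)

lemma restr_reach_mem {G : SimpleGraph V} {T : Set V} {u v : V}
    (h : (restr G T).Reachable u v) (hu : u ∈ T) : v ∈ T := by
  obtain ⟨w⟩ := h
  exact restr_support w hu v (Walk.end_mem_support _)

lemma restr_to_induce {G : SimpleGraph V} {T : Set V} :
    ∀ {u v : V} (w : (restr G T).Walk u v) (hu : u ∈ T) (hv : v ∈ T),
      (G.induce T).Reachable ⟨u, hu⟩ ⟨v, hv⟩ := by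
  intro u v w
  induction w with
  | nil => intro hu hv; exact Reachable.refl _
  | @cons a c _ hadj p ih =>
    intro hu hv
    exact (Adj.reachable (u := (⟨a, hadj.2.1⟩ : T)) (v := ⟨c, hadj.2.2⟩) hadj.1).trans
      (ih hadj.2.2 hv)

lemma key1 [DecidableEq V] {G : SimpleGraph V} {S : Set V} {x c d : V} (hxc : x ≠ c) (hc : c ∉ S)
    (hncd : ¬ (restr G Sᶜ).Reachable c d) (w : (restr G (S \ {x})ᶜ).Walk c d) :
    ∃ z, G.Adj x z ∧ (restr G Sᶜ).Reachable c z := by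
  have hcT : c ∈ (S \ {x})ᶜ := fun hmem => hc hmem.1
  have hsup := restr_support w hcT
  by_cases hx : x ∈ w.support
  · set w1 := w.takeUntil x hx with hw1
    have hcount : w1.support.count x = 1 := w.count_support_takeUntil_eq_one hx
    have hnn : ¬ w1.reverse.Nil := by
      rw [Walk.nil_iff_length_eq, Walk.length_reverse]
      intro hlen
      exact hxc (w1.eq_of_length_eq_zero hlen).symm
    obtain ⟨z, hadj, q, hq⟩ := Walk.not_nil_iff.mp hnn
    have hxq : x ∉ q.support := by
      have h1 : w1.reverse.support.count x = 1 := by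
        rw [Walk.support_reverse, List.count_reverse]; exact hcount
      rw [hq, Walk.support_cons, List.count_cons_self] at h1
      have : q.support.count x = 0 := by omega
      exact fun hmem => by simp [List.count_eq_zero.mp this] at hmem
    have hq_sub : ∀ z' ∈ q.support, z' ∈ Sᶜ := by
      intro z' hz'
      have hmem : z' ∈ w.support := by
        have : z' ∈ w1.reverse.support := by
          rw [hq, Walk.support_cons]; exact List.mem_cons_of_mem _ hz'
        rw [Walk.support_reverse, List.mem_reverse] at this
        exact w.support_takeUntil_subset hx this
      have hzx : z' ≠ x := fun he => hxq (he ▸ hz')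
      intro hzS
      exact (hsup z' hmem) ⟨hzS, hzx⟩
    exact ⟨z, hadj.1, (restr_transfer q hq_sub).symm⟩
  · exfalso
    refine hncd (restr_transfer w ?_)
    intro z hz
    have hzx : z ≠ x := fun he => hx (he ▸ hz)
    intro hzS
    exact (hsup z hz) ⟨hzS, hzx⟩

/-- Prefix of a walk up to index `i`. -/
def takeW {G : SimpleGraph V} : {u v : V} → (w : G.Walk u v) → (i : ℕ) → G.Walk u (w.getVert i)
  | _, _, .nil, _ => .nil
  | _, _, .cons _ _, 0 => .nil
  | _, _, .cons h p, (i + 1) => .cons h (takeW p i)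

lemma length_takeW {G : SimpleGraph V} :
    ∀ {u v : V} (w : G.Walk u v) (i : ℕ), (takeW w i).length ≤ i
  | _, _, .nil, _ => Nat.zero_le _
  | _, _, .cons _ _, 0 => Nat.zero_le _
  | _, _, .cons _ p, (i + 1) => by
      simpa [takeW] using Nat.succ_le_succ (length_takeW p i)

/-- Suffix of a walk from index `i`. -/
def dropW {G : SimpleGraph V} : {u v : V} → (w : G.Walk u v) → (i : ℕ) → G.Walk (w.getVert i) v
  | _, _, w, 0 => w.copy (w.getVert_zero).symm rfl
  | _, _, .nil, (_ + 1) => .nil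
  | _, _, .cons _ p, (i + 1) => dropW p i

lemma length_dropW {G : SimpleGraph V} :
    ∀ {u v : V} (w : G.Walk u v) (i : ℕ), (dropW w i).length ≤ w.length - i
  | _, _, w, 0 => by simp [dropW]
  | _, _, .nil, (i + 1) => by simp [dropW]
  | _, _, .cons _ p, (i + 1) => by
      simpa [dropW] using length_dropW p i

/-- A geodesic walk has no chords. -/
lemma no_chord {G : SimpleGraph V} {x y : V} (p : G.Walk x y) (hp : p.length = G.dist x y)
    {i j : ℕ} (hij : i + 1 < j) (hj : j ≤ p.length)
    (hadj : G.Adj (p.getVert i) (p.getVert j)) : False := by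
  have hw : G.dist x y ≤ ((takeW p i).append ((dropW p j).cons hadj)).length :=
    SimpleGraph.dist_le _
  rw [Walk.length_append, Walk.length_cons] at hw
  have h1 := length_takeW p i
  have h2 := length_dropW p j
  omega

/-- On a path, `getVert` is injective on `[0, length]`. -/
lemma getVert_inj {G : SimpleGraph V} : ∀ {u v : V} (p : G.Walk u v), p.IsPath →
    ∀ {i j : ℕ}, i ≤ p.length → j ≤ p.length → p.getVert i = p.getVert j → i = j := by
  intro u v p
  induction p with
  | nil => intro _ i j hi hj _; simp_all
  | @cons a c _ hadj p ih =>
    intro hp i j hi hj hg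
    rw [Walk.cons_isPath_iff] at hp
    match i, j with
    | 0, 0 => rfl
    | 0, (j + 1) =>
      exfalso
      rw [Walk.getVert_zero, Walk.getVert_cons_succ] at hg
      exact hp.2 (Walk.mem_support_iff_exists_getVert.mpr ⟨j, hg.symm, by
        simpa [Nat.succ_le_succ_iff] using hj⟩)
    | (i + 1), 0 =>
      exfalso
      rw [Walk.getVert_zero, Walk.getVert_cons_succ] at hg
      exact hp.2 (Walk.mem_support_iff_exists_getVert.mpr ⟨i, hg, by
        simpa [Nat.succ_le_succ_iff] using hi⟩)
    | (i + 1), (j + 1) =>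
      rw [Walk.getVert_cons_succ, Walk.getVert_cons_succ] at hg
      have := ih hp.1 (by simpa [Nat.succ_le_succ_iff] using hi)
        (by simpa [Nat.succ_le_succ_iff] using hj) hg
      omega

lemma mod_small {x n : ℕ} (hx : x < 2 * n) :
    x % n = x ∧ x < n ∨ x % n = x - n ∧ n ≤ x := by
  rcases Nat.lt_or_ge x n with h | h
  · exact Or.inl ⟨Nat.mod_eq_of_lt h, h⟩
  · refine Or.inr ⟨?_, h⟩
    rw [Nat.mod_eq_sub_mod h, Nat.mod_eq_of_lt (by omega)]

lemma fin_sub_one {n : ℕ} (hn : 2 ≤ n) (i j : Fin n) :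
    ((i - j : Fin n) : ℕ) = 1 ↔ ((i : ℕ) = (j : ℕ) + 1 ∨ ((i : ℕ) = 0 ∧ (j : ℕ) + 1 = n)) := by
  have hi := i.isLt
  have hj := j.isLt
  rw [Fin.sub_def]
  simp only
  have h2 : n - (j : ℕ) + (i : ℕ) < 2 * n := by omega
  rcases mod_small h2 with ⟨he, hlt⟩ | ⟨he, hle⟩ <;> rw [he] <;> omega

lemma cyc_adj {n : ℕ} (hn : 2 ≤ n) (i j : Fin n) :
    (cycleGraph n).Adj i j ↔
      ((i : ℕ) + 1 = (j : ℕ) ∨ (j : ℕ) + 1 = (i : ℕ) ∨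
        ((i : ℕ) = 0 ∧ (j : ℕ) + 1 = n) ∨ ((j : ℕ) = 0 ∧ (i : ℕ) + 1 = n)) := by
  rw [cycleGraph_adj', fin_sub_one hn, fin_sub_one hn]
  omega

lemma build_emb (G : SimpleGraph V) (n : ℕ) (hn : 4 ≤ n) (f : ℕ → V)
    (h1 : ∀ i, i < n → G.Adj (f i) (f ((i + 1) % n)))
    (h2 : ∀ i j, i < j → j < n → j ≠ i + 1 → ¬(i = 0 ∧ j + 1 = n) → ¬ G.Adj (f i) (f j))
    (h3 : ∀ i j, i < n → j < n → f i = f j → i = j) :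
    Nonempty (cycleGraph n ↪g G) := by
  refine ⟨⟨⟨fun i => f i.val, fun i j h => Fin.ext (h3 _ _ i.isLt j.isLt h)⟩, ?_⟩⟩
  intro i j
  have hi := i.isLt
  have hj := j.isLt
  rw [cyc_adj (by omega)]
  change G.Adj (f i.val) (f j.val) ↔ _
  constructor
  · intro hadj
    by_contra hcyc
    rcases Nat.lt_trichotomy (i : ℕ) (j : ℕ) with h | h | h
    · refine h2 i j h hj ?_ ?_ hadj
      · intro he; exact hcyc (Or.inl (by omega))
      · rintro ⟨ha, hb⟩; exact hcyc (Or.inr (Or.inr (Or.inl ⟨ha, hb⟩)))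
    · exact G.irrefl (by rwa [show (i : Fin n) = j from Fin.ext h] at hadj)
    · refine h2 j i h hi ?_ ?_ hadj.symm
      · intro he; exact hcyc (Or.inr (Or.inl (by omega)))
      · rintro ⟨ha, hb⟩; exact hcyc (Or.inr (Or.inr (Or.inr ⟨ha, hb⟩)))
  · intro hcyc
    rcases hcyc with h | h | ⟨h0, hw⟩ | ⟨h0, hw⟩
    · have := h1 i hi
      rwa [Nat.mod_eq_of_lt (by omega), h] at this
    · have := h1 j hj
      rw [Nat.mod_eq_of_lt (by omega), h] at this
      exact this.symm
    · have := h1 j hj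
      rw [hw, Nat.mod_self] at this
      rw [show (0 : ℕ) = (i : ℕ) from h0.symm] at this
      exact this.symm
    · have := h1 i hi
      rw [hw, Nat.mod_self] at this
      rw [show (0 : ℕ) = (j : ℕ) from h0.symm] at this
      exact this

end CliqueCutAux

open CliqueCutAux

/-- A graph is chordal if it contains no induced cycle of length at least 4. -/
def SimpleGraph.IsChordal {V : Type*} (G : SimpleGraph V) : Prop :=
  ∀ n : ℕ, 4 ≤ n → IsEmpty (cycleGraph n ↪g G)

/-- Every chordal graph is either a complete graph or has a clique cutset. -/
theorem chordal_complete_or_clique_cutset {V : Type*} [Fintype V] (G : SimpleGraph V)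
    (hch : G.IsChordal) :
    (∀ u v : V, u ≠ v → G.Adj u v) ∨
      ∃ s : Set V, G.IsClique s ∧ ¬ (G.induce sᶜ).Preconnected := by
  classical
  by_cases hcomp : ∀ u v : V, u ≠ v → G.Adj u v
  · exact Or.inl hcomp
  right
  push_neg at hcomp
  obtain ⟨a, b, hab, hnab⟩ := hcomp
  let P : Finset V → Prop := fun S => a ∉ S ∧ b ∉ S ∧ ¬ (restr G (↑S : Set V)ᶜ).Reachable a b
  have hP0 : P (Finset.univ \ {a, b}) := by
    refine ⟨by simp, by simp, ?_⟩
    rintro ⟨w⟩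
    cases w with
    | nil => exact hab rfl
    | @cons _ z _ h p =>
      have hz : z ∈ (↑(Finset.univ \ ({a, b} : Finset V)) : Set V)ᶜ := h.2.2
      have hz' : z = a ∨ z = b := by
        rw [or_iff_not_imp_left]
        simpa using hz
      rcases hz' with rfl | rfl
      · exact G.irrefl h.1
      · exact hnab h.1
  have hex : ∃ n : ℕ, ∃ S : Finset V, P S ∧ S.card = n := ⟨_, _, hP0, rfl⟩
  obtain ⟨S, hPS, hcard⟩ := Nat.find_spec hex
  have hmin : ∀ S' : Finset V, P S' → S.card ≤ S'.card := by
    intro S' h'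
    rw [hcard]
    exact Nat.find_min' hex ⟨S', h', rfl⟩
  obtain ⟨ha_S, hb_S, hnreach⟩ := hPS
  -- every vertex of S has a neighbor reachable from a and one reachable from b
  have hkey : ∀ x ∈ S,
      (∃ z, G.Adj x z ∧ (restr G (↑S : Set V)ᶜ).Reachable a z) ∧
      (∃ z, G.Adj x z ∧ (restr G (↑S : Set V)ᶜ).Reachable b z) := by
    intro x hx
    have hcard' : (S.erase x).card < S.card := Finset.card_erase_lt_of_mem hx
    have hP' : ¬ P (S.erase x) := fun h => absurd (hmin _ h) (by omega)
    have hreach' : (restr G (↑(S.erase x) : Set V)ᶜ).Reachable a b := by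
      by_contra h
      exact hP' ⟨fun hc => ha_S (Finset.mem_of_mem_erase hc),
        fun hc => hb_S (Finset.mem_of_mem_erase hc), h⟩
    rw [Finset.coe_erase] at hreach'
    obtain ⟨w⟩ := hreach'
    have hxa : x ≠ a := fun h => ha_S (h ▸ hx)
    have hxb : x ≠ b := fun h => hb_S (h ▸ hx)
    have hnreach' : ¬ (restr G (↑S : Set V)ᶜ).Reachable b a := fun h => hnreach h.symm
    exact ⟨key1 hxa ha_S hnreach w, key1 hxb hb_S hnreach' w.reverse⟩
  have hclq : ∀ x ∈ S, ∀ y ∈ S, x ≠ y → G.Adj x y := by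
    intro x hx y hy hxy
    by_contra hnadj
    have haSc : a ∈ ((↑S : Set V)ᶜ) := ha_S
    have hbSc : b ∈ ((↑S : Set V)ᶜ) := hb_S
    set A : Set V := {v | (restr G (↑S : Set V)ᶜ).Reachable a v} with hA_def
    set B : Set V := {v | (restr G (↑S : Set V)ᶜ).Reachable b v} with hB_def
    have hAmem : ∀ v ∈ A, v ∈ ((↑S : Set V)ᶜ) := fun v hv => restr_reach_mem hv haSc
    have hBmem : ∀ v ∈ B, v ∈ ((↑S : Set V)ᶜ) := fun v hv => restr_reach_mem hv hbSc
    have hABne : ∀ u ∈ A, ∀ v ∈ B, u ≠ v := by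
      rintro u hu v hv rfl
      exact hnreach (hu.trans hv.symm)
    have hABnadj : ∀ u ∈ A, ∀ v ∈ B, ¬ G.Adj u v := by
      intro u hu v hv hadj
      have hadj' : (restr G (↑S : Set V)ᶜ).Adj u v := ⟨hadj, hAmem u hu, hBmem v hv⟩
      exact hnreach (Reachable.trans hu (hadj'.reachable.trans hv.symm))
    have hxA : x ∉ A := fun h => (hAmem x h) hx
    have hyA : y ∉ A := fun h => (hAmem y h) hy
    have hxB : x ∉ B := fun h => (hBmem x h) hx
    have hyB : y ∉ B := fun h => (hBmem y h) hy
    set TA : Set V := A ∪ {x, y} with hTA_def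
    set TB : Set V := B ∪ {x, y} with hTB_def
    have hxTA : x ∈ TA := Or.inr (Or.inl rfl)
    have hyTA : y ∈ TA := Or.inr (Or.inr rfl)
    have hxTB : x ∈ TB := Or.inr (Or.inl rfl)
    have hyTB : y ∈ TB := Or.inr (Or.inr rfl)
    -- x and y are connected through A
    have hreachA : (restr G TA).Reachable x y := by
      obtain ⟨zx, hxz, hrx⟩ := (hkey x hx).1
      obtain ⟨zy, hyz, hry⟩ := (hkey y hy).1
      obtain ⟨w⟩ := hrx.symm.trans hry
      have hws : ∀ u ∈ w.support, u ∈ TA := by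
        intro u hu
        exact Or.inl (hrx.trans ⟨w.takeUntil u hu⟩)
      have hmid := restr_transfer w hws
      have haxz : (restr G TA).Adj x zx := ⟨hxz, hxTA, Or.inl hrx⟩
      have hayz : (restr G TA).Adj y zy := ⟨hyz, hyTA, Or.inl hry⟩
      exact (haxz.reachable).trans (hmid.trans hayz.reachable.symm)
    -- y and x are connected through B
    have hreachB : (restr G TB).Reachable y x := by
      obtain ⟨zx, hxz, hrx⟩ := (hkey x hx).2
      obtain ⟨zy, hyz, hry⟩ := (hkey y hy).2
      obtain ⟨w⟩ := hry.symm.trans hrx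
      have hws : ∀ u ∈ w.support, u ∈ TB := by
        intro u hu
        exact Or.inl (hry.trans ⟨w.takeUntil u hu⟩)
      have hmid := restr_transfer w hws
      have haxz : (restr G TB).Adj x zx := ⟨hxz, hxTB, Or.inl hrx⟩
      have hayz : (restr G TB).Adj y zy := ⟨hyz, hyTB, Or.inl hry⟩
      exact (hayz.reachable).trans (hmid.trans haxz.reachable.symm)
    -- geodesics
    obtain ⟨p0, hp0len⟩ := hreachA.exists_walk_length_eq_dist
    set pp := p0.bypass with hpp_def
    have hppIsPath := p0.bypass_isPath
    have hpplen : pp.length = (restr G TA).dist x y :=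
      le_antisymm (hp0len ▸ p0.length_bypass_le) (dist_le pp)
    set m := pp.length with hm_def
    have hm2 : 2 ≤ m := by
      have hne0 : m ≠ 0 := fun h0 => hxy (pp.eq_of_length_eq_zero h0)
      have hne1 : m ≠ 1 := fun h1 => hnadj (pp.adj_of_length_eq_one h1).1
      omega
    obtain ⟨q0, hq0len⟩ := hreachB.exists_walk_length_eq_dist
    set qq := q0.bypass with hqq_def
    have hqqIsPath := q0.bypass_isPath
    have hqqlen : qq.length = (restr G TB).dist y x :=
      le_antisymm (hq0len ▸ q0.length_bypass_le) (dist_le qq)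
    set k := qq.length with hk_def
    have hk2 : 2 ≤ k := by
      have hne0 : k ≠ 0 := fun h0 => hxy (qq.eq_of_length_eq_zero h0).symm
      have hne1 : k ≠ 1 := fun h1 => hnadj (qq.adj_of_length_eq_one h1).1.symm
      omega
    have hppsup : ∀ z ∈ pp.support, z ∈ TA := restr_support pp hxTA
    have hqqsup : ∀ z ∈ qq.support, z ∈ TB := restr_support qq hyTB
    have hppm : pp.getVert m = y := pp.getVert_length
    have hqqk : qq.getVert k = x := qq.getVert_length
    have hppint : ∀ i, 0 < i → i < m → pp.getVert i ∈ A := by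
      intro i h0 hilt
      have hmem : pp.getVert i ∈ TA :=
        hppsup _ (Walk.mem_support_iff_exists_getVert.mpr ⟨i, rfl, by omega⟩)
      rcases hmem with h | h
      · exact h
      · exfalso
        rcases h with h | h
        · have := getVert_inj pp hppIsPath (i := i) (j := 0) (by omega) (by omega)
            (by rw [h, pp.getVert_zero])
          omega
        · have hy' : pp.getVert i = y := h
          have := getVert_inj pp hppIsPath (i := i) (j := m) (by omega) le_rfl
            (by rw [hy', hppm])
          omega
    have hqqint : ∀ i, 0 < i → i < k → qq.getVert i ∈ B := by
      intro i h0 hilt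
      have hmem : qq.getVert i ∈ TB :=
        hqqsup _ (Walk.mem_support_iff_exists_getVert.mpr ⟨i, rfl, by omega⟩)
      rcases hmem with h | h
      · exact h
      · exfalso
        rcases h with h | h
        · have := getVert_inj qq hqqIsPath (i := i) (j := k) (by omega) le_rfl
            (by rw [h, hqqk])
          omega
        · have hy' : qq.getVert i = y := h
          have := getVert_inj qq hqqIsPath (i := i) (j := 0) (by omega) (by omega)
            (by rw [hy', qq.getVert_zero])
          omega
    set n := m + k with hn_def
    set f : ℕ → V := fun i => if i < m then pp.getVert i else qq.getVert (i - m) with hf_def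
    have hfp : ∀ j, j ≤ m → f j = pp.getVert j := by
      intro j hj
      by_cases h : j < m
      · simp [hf_def, h]
      · have hjm : j = m := by omega
        subst hjm
        simp [hf_def, Nat.lt_irrefl, qq.getVert_zero, hppm]
    have hfq : ∀ j, m ≤ j → f j = qq.getVert (j - m) := by
      intro j hj
      have h : ¬ j < m := by omega
      simp [hf_def, h]
    have hf0 : f 0 = x := by rw [hfp 0 (by omega), pp.getVert_zero]
    -- the cycle has adjacent consecutive vertices
    have h1 : ∀ i, i < n → G.Adj (f i) (f ((i + 1) % n)) := by
      intro i hi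
      by_cases hin : i + 1 = n
      · rw [hin, Nat.mod_self, hf0, hfq i (by omega)]
        have : i - m = k - 1 := by omega
        rw [this]
        have hadj := qq.adj_getVert_succ (i := k - 1) (by omega)
        rw [show k - 1 + 1 = k by omega, hqqk] at hadj
        exact hadj.1
      · rw [Nat.mod_eq_of_lt (by omega)]
        by_cases him : i + 1 ≤ m
        · rw [hfp i (by omega), hfp (i + 1) him]
          exact (pp.adj_getVert_succ (by omega)).1
        · rw [hfq i (by omega), hfq (i + 1) (by omega)]
          rw [show i + 1 - m = (i - m) + 1 by omega]
          exact (qq.adj_getVert_succ (by omega)).1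
    -- injectivity
    have h3 : ∀ i j, i < j → j < n → f i ≠ f j := by
      intro i j hij hj hf
      by_cases hjm : j ≤ m
      · rw [hfp i (by omega), hfp j hjm] at hf
        have := getVert_inj pp hppIsPath (by omega : i ≤ pp.length) (by omega) hf
        omega
      · by_cases him : m ≤ i
        · rw [hfq i him, hfq j (by omega)] at hf
          have := getVert_inj qq hqqIsPath (i := i - m) (j := j - m) (by omega) (by omega) hf
          omega
        · -- i < m < j
          rw [hfp i (by omega), hfq j (by omega)] at hf
          have hB' : qq.getVert (j - m) ∈ B := hqqint (j - m) (by omega) (by omega)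
          by_cases hi0 : i = 0
          · subst hi0
            rw [pp.getVert_zero] at hf
            exact hxB (hf ▸ hB')
          · have hA' : pp.getVert i ∈ A := hppint i (by omega) (by omega)
            exact hABne _ hA' _ hB' hf
    -- no chords
    have h2 : ∀ i j, i < j → j < n → j ≠ i + 1 → ¬(i = 0 ∧ j + 1 = n) → ¬ G.Adj (f i) (f j) := by
      intro i j hij hj hne1 hne2 hadj
      by_cases hjm : j ≤ m
      · rw [hfp i (by omega), hfp j hjm] at hadj
        have hmi : pp.getVert i ∈ TA :=
          hppsup _ (Walk.mem_support_iff_exists_getVert.mpr ⟨i, rfl, by omega⟩)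
        have hmj : pp.getVert j ∈ TA :=
          hppsup _ (Walk.mem_support_iff_exists_getVert.mpr ⟨j, rfl, by omega⟩)
        exact no_chord pp hpplen (by omega) (by omega) ⟨hadj, hmi, hmj⟩
      · by_cases him : m ≤ i
        · rw [hfq i him, hfq j (by omega)] at hadj
          have hmi : qq.getVert (i - m) ∈ TB :=
            hqqsup _ (Walk.mem_support_iff_exists_getVert.mpr ⟨i - m, rfl, by omega⟩)
          have hmj : qq.getVert (j - m) ∈ TB :=
            hqqsup _ (Walk.mem_support_iff_exists_getVert.mpr ⟨j - m, rfl, by omega⟩)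
          exact no_chord qq hqqlen (i := i - m) (j := j - m) (by omega) (by omega)
            ⟨hadj, hmi, hmj⟩
        · -- i < m < j
          rw [hfp i (by omega), hfq j (by omega)] at hadj
          have hB' : qq.getVert (j - m) ∈ B := hqqint (j - m) (by omega) (by omega)
          by_cases hi0 : i = 0
          · subst hi0
            rw [pp.getVert_zero] at hadj
            -- chord from x = qq.getVert k to an interior vertex of qq
            have hjn : j + 1 ≠ n := fun h => hne2 ⟨rfl, h⟩
            have hmj : qq.getVert (j - m) ∈ TB :=
              hqqsup _ (Walk.mem_support_iff_exists_getVert.mpr ⟨j - m, rfl, by omega⟩)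
            have hadj' : G.Adj (qq.getVert (j - m)) (qq.getVert k) := by
              rw [hqqk]; exact hadj.symm
            exact no_chord qq hqqlen (i := j - m) (j := k) (by omega) le_rfl
              ⟨hadj', hmj, by rw [hqqk]; exact hxTB⟩
          · have hA' : pp.getVert i ∈ A := hppint i (by omega) (by omega)
            exact hABnadj _ hA' _ hB' hadj
    have h3' : ∀ i j, i < n → j < n → f i = f j → i = j := by
      intro i j hi hj hf
      rcases Nat.lt_trichotomy i j with h | h | h
      · exact absurd hf (h3 i j h hj)
      · exact h
      · exact absurd hf.symm (h3 j i h hi)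
    obtain ⟨e⟩ := build_emb G n (by omega) f h1 h2 h3'
    exact (hch n (by omega)).false e
  refine ⟨↑S, ?_, ?_⟩
  · intro u hu v hv huv
    exact hclq u hu v hv huv
  · intro hpre
    have h := hpre ⟨a, ha_S⟩ ⟨b, hb_S⟩
    obtain ⟨w⟩ := h
    refine hnreach ⟨w.map (⟨Subtype.val, ?_⟩ :
      G.induce ((↑S : Set V)ᶜ) →g restr G ((↑S : Set V)ᶜ))⟩
    intro u v huv
    exact ⟨huv, u.2, v.2⟩
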